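/- arXiv:1204.1796 — 3 statements merged into one kernel-verified Lean document; each statement's English description precedes it below -/
import Mathlib

section
/- Let G = N ⋊ G₀ be a Frobenius group with kernel N and complement G₀. If |G₀| is even, then N is abelian. -/
/-- If `G = N ⋊ G₀` is a Frobenius group with kernel `N` and complement `G₀`,
and `|G₀|` is even, then `N` is abelian. -/
theorem frobenius_kernel_abelian_of_even_complement
    {G : Type*} [Group G] [Finite G] (N G₀ : Subgroup G)
    (hN : N ≠ ⊥) (hG₀ : G₀ ≠ ⊥) [N.Normal]
    (hinf : N ⊓ G₀ = ⊥) (hsup : N ⊔ G₀ = ⊤)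
    (hfree : ∀ x ∈ N, x ≠ 1 → ∀ g ∈ G₀, g ≠ 1 → g * x * g⁻¹ ≠ x)
    (heven : Even (Nat.card G₀)) :
    ∀ a ∈ N, ∀ b ∈ N, a * b = b * a := by
  classical
  have hNormal : N.Normal := inferInstance
  -- find an involution in G₀
  haveI : Fact (Nat.Prime 2) := ⟨Nat.prime_two⟩
  obtain ⟨g', hg'⟩ : ∃ g : G₀, orderOf g = 2 := by
    haveI : Fintype G₀ := Fintype.ofFinite _
    exact exists_prime_orderOf_dvd_card 2
      (by simpa [Nat.card_eq_fintype_card] using heven.two_dvd)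
  set g : G := (g' : G) with hgdef
  have hgG₀ : g ∈ G₀ := g'.2
  have hgne : g ≠ 1 := by
    intro h
    have : (g' : G₀) = 1 := Subtype.ext h
    rw [this, orderOf_one] at hg'
    omega
  have hg2 : g * g = 1 := by
    have := pow_orderOf_eq_one g'
    rw [hg'] at this
    have : (g' : G₀) ^ 2 = 1 := this
    have := congrArg (Subtype.val) this
    simpa [pow_two] using this
  have hginv : g⁻¹ = g := by
    rw [eq_comm, eq_inv_iff_mul_eq_one, hg2]
  -- fixed-point freeness for g
  have hfix : ∀ x ∈ N, g * x * g⁻¹ = x → x = 1 := by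
    intro x hx hconj
    by_contra hx1
    exact hfree x hx hx1 g hgG₀ hgne hconj
  -- the map x ↦ x⁻¹ * g x g⁻¹ on N
  let ψ : N → N := fun x => ⟨(x : G)⁻¹ * (g * x * g⁻¹),
    mul_mem (inv_mem x.2) (hNormal.conj_mem _ x.2 g)⟩
  have hinj : Function.Injective ψ := by
    intro x y hxy
    have h : (x : G)⁻¹ * (g * x * g⁻¹) = (y : G)⁻¹ * (g * y * g⁻¹) :=
      congrArg Subtype.val hxy
    have hfp : g * ((y : G) * (x : G)⁻¹) * g⁻¹ = (y : G) * (x : G)⁻¹ := by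
      calc g * ((y:G) * (x:G)⁻¹) * g⁻¹
          = (g * y * g⁻¹) * (g * (x:G)⁻¹ * g⁻¹) := by group
        _ = (y : G) * ((x:G)⁻¹ * (g * x * g⁻¹)) * (g * (x:G)⁻¹ * g⁻¹) := by
              rw [h]; group
        _ = (y : G) * (x : G)⁻¹ := by group
    have : (y : G) * (x : G)⁻¹ = 1 :=
      hfix _ (mul_mem y.2 (inv_mem x.2)) hfp
    have : (y : G) = (x : G) := by
      rw [mul_inv_eq_one] at this; exact this
    exact Subtype.ext this.symm
  have hsurj : Function.Surjective ψ := Finite.surjective_of_injective hinj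
  -- g inverts every element of N
  have hinvert : ∀ n ∈ N, g * n * g⁻¹ = n⁻¹ := by
    intro n hn
    obtain ⟨x, hx⟩ := hsurj ⟨n, hn⟩
    have hx' : (x : G)⁻¹ * (g * x * g⁻¹) = n := congrArg Subtype.val hx
    rw [← hx']
    calc g * ((x : G)⁻¹ * (g * x * g⁻¹)) * g⁻¹
        = (g * (x:G)⁻¹ * g⁻¹) * (g * g * (x:G) * (g * g)⁻¹) := by group
      _ = (g * (x:G)⁻¹ * g⁻¹) * (x : G) := by rw [hg2]; group
      _ = ((x : G)⁻¹ * (g * x * g⁻¹))⁻¹ := by group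
  -- conclude commutativity
  intro a ha b hb
  have h1 : g * (a * b) * g⁻¹ = (a * b)⁻¹ := hinvert _ (mul_mem ha hb)
  have h2 : g * (a * b) * g⁻¹ = a⁻¹ * b⁻¹ := by
    calc g * (a * b) * g⁻¹ = (g * a * g⁻¹) * (g * b * g⁻¹) := by group
      _ = a⁻¹ * b⁻¹ := by rw [hinvert a ha, hinvert b hb]
  have : b⁻¹ * a⁻¹ = a⁻¹ * b⁻¹ := by rw [← mul_inv_rev, ← h1, h2]
  have := congrArg (·⁻¹) this
  simpa [mul_inv_rev] using this
end

section
/- A finite group G in which every abelian subgroup is cyclic has the property that every Sylow p-subgroup for an odd prime p is cyclic. -/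
open Subgroup

section Helpers

variable {Q : Type*} [Group Q]

/-- In a finite cyclic group, any element killed by `orderOf a` lies in `zpowers a`. -/
private lemma mem_zpowers_of_pow_orderOf_eq_one {H : Type*} [Group H] [Finite H] [IsCyclic H]
    (a b : H) (hb : b ^ orderOf a = 1) : b ∈ Subgroup.zpowers a := by
  classical
  have : Fintype H := Fintype.ofFinite H
  set n := orderOf a with hn
  have hn0 : 0 < n := orderOf_pos a
  have hle : ({x : H | x ^ n = 1} : Finset H).card ≤ n := IsCyclic.card_pow_eq_one_le hn0
  have hsub : (Subgroup.zpowers a : Set H).toFinset ⊆ ({x : H | x ^ n = 1} : Finset H) := by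
    intro g hg
    simp only [Set.mem_toFinset, SetLike.mem_coe] at hg
    obtain ⟨j, rfl⟩ := Subgroup.mem_zpowers_iff.mp hg
    simp only [Finset.mem_filter, Finset.mem_univ, true_and, Set.mem_setOf_eq]
    have h1 : a ^ (n : ℕ) = 1 := pow_orderOf_eq_one a
    calc (a ^ j) ^ n = (a ^ (n : ℕ)) ^ j := by
          rw [← zpow_natCast, ← zpow_mul, mul_comm, zpow_mul, zpow_natCast]
      _ = 1 := by rw [h1, one_zpow]
  have hcard : (Subgroup.zpowers a : Set H).toFinset.card = n := by
    rw [Set.toFinset_card]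
    exact Fintype.card_zpowers
  have heq : (Subgroup.zpowers a : Set H).toFinset = ({x : H | x ^ n = 1} : Finset H) :=
    Finset.eq_of_subset_of_card_le hsub (by rw [hcard]; exact hle)
  have hb' : b ∈ ({x : H | x ^ n = 1} : Finset H) := by
    simp only [Finset.mem_filter, Finset.mem_univ, true_and, Set.mem_setOf_eq]
    exact hb
  rw [← heq, Set.mem_toFinset] at hb'
  exact hb'

private lemma gauss_pow (y v e : Q) (h1 : v * y = y * (v * e))
    (hey : Commute e y) (hev : Commute e v) :
    ∀ n : ℕ, (y * v) ^ n = y ^ n * v ^ n * e ^ (n * (n - 1) / 2) := by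
  have hA : ∀ n : ℕ, v ^ n * y = y * (v ^ n * e ^ n) := by
    intro n
    induction n with
    | zero => simp
    | succ m ih =>
      have : v ^ (m + 1) * y = v ^ m * (v * y) := by rw [pow_succ, mul_assoc]
      rw [this, h1, ← mul_assoc, ih]
      have : v ^ m * e ^ m * (v * e) = v ^ (m + 1) * e ^ (m + 1) := by
        rw [pow_succ, pow_succ]
        have h2 : e ^ m * v = v * e ^ m := (hev.pow_left m).eq
        calc v ^ m * e ^ m * (v * e) = v ^ m * (e ^ m * v) * e := by group
          _ = v ^ m * (v * e ^ m) * e := by rw [h2]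
          _ = v ^ m * v * (e ^ m * e) := by group
      rw [mul_assoc y, this, ← mul_assoc]
  intro n
  induction n with
  | zero => simp
  | succ m ih =>
    have hdiv : (m + 1) * (m + 1 - 1) / 2 = m * (m - 1) / 2 + m := by
      have h2 : (m + 1) * (m + 1 - 1) = m * (m - 1) + 2 * m := by
        cases m with
        | zero => rfl
        | succ l => simp only [Nat.add_sub_cancel]; ring
      rw [h2, Nat.add_mul_div_left _ _ (by norm_num : 0 < 2)]
    rw [pow_succ, ih, hdiv]
    have h3 : e ^ (m * (m - 1) / 2) * y = y * e ^ (m * (m - 1) / 2) := (hey.pow_left _).eq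
    have h4 : e ^ (m * (m - 1) / 2) * v = v * e ^ (m * (m - 1) / 2) := (hev.pow_left _).eq
    calc y ^ m * v ^ m * e ^ (m * (m - 1) / 2) * (y * v)
        = y ^ m * v ^ m * (e ^ (m * (m - 1) / 2) * y) * v := by group
      _ = y ^ m * v ^ m * (y * e ^ (m * (m - 1) / 2)) * v := by rw [h3]
      _ = y ^ m * (v ^ m * y) * (e ^ (m * (m - 1) / 2) * v) := by group
      _ = y ^ m * (y * (v ^ m * e ^ m)) * (v * e ^ (m * (m - 1) / 2)) := by rw [hA m, h4]
      _ = y ^ (m + 1) * (v ^ m * (e ^ m * v)) * e ^ (m * (m - 1) / 2) := by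
          rw [pow_succ]; group
      _ = y ^ (m + 1) * (v ^ m * (v * e ^ m)) * e ^ (m * (m - 1) / 2) := by
          rw [(hev.pow_left m).symm.eq]
      _ = y ^ (m + 1) * v ^ (m + 1) * (e ^ m * e ^ (m * (m - 1) / 2)) := by
          rw [pow_succ]; group
      _ = y ^ (m + 1) * v ^ (m + 1) * e ^ (m * (m - 1) / 2 + m) := by
          rw [pow_add e (m * (m - 1) / 2) m]
          exact congrArg _ (((Commute.refl e).pow_pow m _).eq)

end Helpers

section KeyContra

private lemma key_contra {Q : Type*} [Group Q] [Finite Q] {p : ℕ} (hp : p.Prime) (hodd : Odd p)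
    (h : ∀ H : Subgroup Q, (∀ a ∈ H, ∀ b ∈ H, a * b = b * a) → IsCyclic H)
    (x y : Q) (hy : y ∉ Subgroup.zpowers x)
    (hMn : (Subgroup.zpowers x).Normal) (hNn : (Subgroup.zpowers y).Normal)
    (hxpN : x ^ p ∈ Subgroup.zpowers y)
    (hcomm : x * y ≠ y * x)
    (k : ℤ) (hk : (x ^ p) ^ k = y ^ p) : False := by
  haveI hfact : Fact p.Prime := ⟨hp⟩
  set c := x⁻¹ * y⁻¹ * x * y with hc
  have hconj : y⁻¹ * x * y = x * c := by rw [hc]; group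
  have hcM : c ∈ zpowers x := by
    have h1 : y⁻¹ * x * y ∈ zpowers x := by
      have := hMn.conj_mem x (mem_zpowers x) y⁻¹
      simpa using this
    have h2 : c = x⁻¹ * (y⁻¹ * x * y) := by rw [hc]; group
    rw [h2]
    exact mul_mem (inv_mem (mem_zpowers x)) h1
  have hcN : c ∈ zpowers y := by
    have h1 : x⁻¹ * y⁻¹ * x ∈ zpowers y := by
      have := hNn.conj_mem y⁻¹ (inv_mem (mem_zpowers y)) x⁻¹
      simpa [mul_assoc] using this
    have h2 : c = (x⁻¹ * y⁻¹ * x) * y := hc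
    rw [h2]
    exact mul_mem h1 (mem_zpowers y)
  have hxc : Commute x c := by
    obtain ⟨j, hj⟩ := Subgroup.mem_zpowers_iff.mp hcM
    exact hj ▸ (Commute.refl x).zpow_right j
  have hyc : Commute y c := by
    obtain ⟨j, hj⟩ := Subgroup.mem_zpowers_iff.mp hcN
    exact hj ▸ (Commute.refl y).zpow_right j
  have hc1 : c ≠ 1 := by
    intro h1
    apply hcomm
    rw [h1, mul_one] at hconj
    calc x * y = y * (y⁻¹ * x * y) := by group
      _ = y * x := by rw [hconj]
  have hxpy : Commute (x ^ p) y := by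
    obtain ⟨j, hj⟩ := Subgroup.mem_zpowers_iff.mp hxpN
    exact hj ▸ ((Commute.refl y).zpow_left j)
  have hconjn : ∀ m : ℤ, y⁻¹ * x ^ m * y = x ^ m * c ^ m := by
    intro m
    have h1 : (y⁻¹ * x * y)^m = y⁻¹ * x ^ m * y := by
      have := conj_zpow (i := m) (a := y⁻¹) (b := x)
      simpa using this
    rw [← h1, hconj, hxc.mul_zpow]
  have hcp : c ^ p = 1 := by
    have h1 : (y⁻¹ * x * y) ^ p = y⁻¹ * x ^ p * y := by
      have := conj_pow (i := p) (a := y⁻¹) (b := x)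
      simpa using this
    have h2 : y⁻¹ * x ^ p * y = x ^ p := by
      rw [mul_assoc, hxpy.eq, ← mul_assoc]
      group
    have h3 : (y⁻¹ * x * y) ^ p = x ^ p * c ^ p := by rw [hconj, hxc.mul_pow]
    have h4 : x ^ p * c ^ p = x ^ p := h3.symm.trans (h1.trans h2)
    have h5 : x ^ p * c ^ p = x ^ p * 1 := h4.trans (mul_one _).symm
    exact mul_left_cancel h5
  set v := x ^ (-k) with hv
  set e := c ^ (-k) with he
  have hev : Commute e v := (hxc.symm).zpow_zpow (-k) (-k)
  have hey : Commute e y := ((hyc.symm).zpow_left (-k))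
  have h1 : v * y = y * (v * e) := by
    have := hconjn (-k)
    calc v * y = y * (y⁻¹ * x ^ (-k) * y) := by simp only [hv]; group
      _ = y * (v * e) := by rw [this]
  have gauss := gauss_pow y v e h1 hey hev p
  have hep : e ^ p = (1 : Q) := by
    have h2 : (c ^ (-k)) ^ (p : ℕ) = (c ^ (p : ℕ)) ^ (-k) := by
      rw [← zpow_natCast (c ^ (-k)), ← zpow_mul, mul_comm, zpow_mul, zpow_natCast]
    rw [he, h2, hcp, one_zpow]
  have hT : e ^ (p * (p - 1) / 2) = 1 := by
    obtain ⟨t, ht⟩ := hodd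
    have hdiv : p * (p - 1) / 2 = p * t := by
      have h2 : p * (p - 1) = 2 * (p * t) := by
        subst ht
        have : 2 * t + 1 - 1 = 2 * t := by omega
        rw [this]; ring
      rw [h2, Nat.mul_div_cancel_left _ (by norm_num : 0 < 2)]
    rw [hdiv, pow_mul, hep, one_pow]
  have hvp : v ^ p = (y ^ p)⁻¹ := by
    have h2 : (x ^ (-k)) ^ (p : ℕ) = ((x ^ (p : ℕ)) ^ k)⁻¹ := by
      rw [← zpow_natCast (x ^ (-k)), ← zpow_mul, ← zpow_natCast x, ← zpow_mul, ← zpow_neg]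
      congr 1; ring
    rw [hv, h2, hk]
  set w := y * v with hwdef
  have hw : w ^ p = 1 := by
    rw [hwdef, gauss, hT, mul_one, hvp, mul_inv_cancel]
  have hwc : Commute w c := by
    have hvc : Commute v c := hxc.zpow_left (-k)
    exact hyc.mul_left hvc
  set H := Subgroup.closure ({w, c} : Set Q) with hH
  have hcomH : ∀ a ∈ H, ∀ b ∈ H, a * b = b * a := by
    intro a ha b hb
    refine Subgroup.closure_induction₂
      (p := fun a b _ _ => Commute a b) ?_ ?_ ?_ ?_ ?_ ?_ ?_ ha hb
    · intro s t hs htmem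
      simp only [Set.mem_insert_iff, Set.mem_singleton_iff] at hs htmem
      rcases hs with rfl | rfl <;> rcases htmem with rfl | rfl
      · exact Commute.refl _
      · exact hwc
      · exact hwc.symm
      · exact Commute.refl _
    · intro s _; exact Commute.one_left s
    · intro s _; exact Commute.one_right s
    · intro s t u _ _ _ h1 h2; exact h1.mul_left h2
    · intro s t u _ _ _ h1 h2; exact h1.mul_right h2
    · intro s t _ _ h1; exact h1.inv_left
    · intro s t _ _ h1; exact h1.inv_right
  have hHcyc : IsCyclic ↥H := h H hcomH
  have hwH : w ∈ H := subset_closure (Set.mem_insert _ _)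
  have hcH : c ∈ H := subset_closure (Set.mem_insert_of_mem _ rfl)
  set c' : ↥H := ⟨c, hcH⟩ with hc'
  set w' : ↥H := ⟨w, hwH⟩ with hw'
  have hcop : orderOf c' = p := by
    apply orderOf_eq_prime
    · exact Subtype.ext (by simpa using hcp)
    · intro h1
      exact hc1 (congrArg Subtype.val h1)
  have hwp : w' ^ orderOf c' = 1 := by
    rw [hcop]
    exact Subtype.ext (by simpa using hw)
  have hmem := mem_zpowers_of_pow_orderOf_eq_one c' w' hwp
  obtain ⟨j, hj⟩ := Subgroup.mem_zpowers_iff.mp hmem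
  have hwx : w ∈ zpowers x := by
    have h2 : (c : Q) ^ j = w := by
      have := congrArg Subtype.val hj
      simpa using this
    rw [← h2]
    exact zpow_mem hcM j
  apply hy
  have h2 : y = w * x ^ k := by rw [hwdef, hv]; group
  rw [h2]
  exact mul_mem hwx (zpow_mem (mem_zpowers x) k)

end KeyContra

section Main

universe u

private lemma main_aux {p : ℕ} (hp : p.Prime) (hodd : Odd p) :
    ∀ (n : ℕ) (Q : Type u) [Group Q] [Finite Q], Nat.card Q ≤ n → IsPGroup p Q →
      (∀ H : Subgroup Q, (∀ a ∈ H, ∀ b ∈ H, a * b = b * a) → IsCyclic H) → IsCyclic Q := by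
  intro n
  induction n with
  | zero =>
    intro Q _ _ hcard _ _
    have : 0 < Nat.card Q := Nat.card_pos
    omega
  | succ n IH =>
    intro Q _ _ hcard hpg h
    haveI hfact : Fact p.Prime := ⟨hp⟩
    by_cases hQ : IsCyclic Q
    · exact hQ
    by_cases habel : ∀ a b : Q, a * b = b * a
    · haveI := h ⊤ (fun a _ b _ => habel a b)
      exact isCyclic_of_surjective Subgroup.topEquiv Subgroup.topEquiv.surjective
    push_neg at habel
    obtain ⟨a, b, hab⟩ := habel
    haveI : Nontrivial Q := by
      rcases subsingleton_or_nontrivial Q with hs | hs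
      · exact absurd (Subsingleton.elim _ _) hab
      · exact hs
    -- every proper subgroup is cyclic
    have proper_cyclic : ∀ K : Subgroup Q, K ≠ ⊤ → IsCyclic K := by
      intro K hK
      have hlt : Nat.card K < Nat.card Q := by
        rcases lt_or_ge (Nat.card K) (Nat.card Q) with hlt | hge
        · exact hlt
        · exfalso
          apply hK
          apply Subgroup.eq_of_le_of_card_ge le_top
          rw [Subgroup.card_top]
          exact hge
      refine IH K (by omega) (hpg.to_subgroup K) ?_
      intro H hcom
      haveI := h (H.map K.subtype) (by
        intro s hs t ht
        obtain ⟨s', hs', rfl⟩ := Subgroup.mem_map.mp hs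
        obtain ⟨t', ht', rfl⟩ := Subgroup.mem_map.mp ht
        rw [← map_mul, ← map_mul, hcom s' hs' t' ht'])
      exact isCyclic_of_surjective
        (Subgroup.equivMapOfInjective H K.subtype (Subgroup.subtype_injective K)).symm
        (MulEquiv.surjective _)
    -- coatoms above proper subgroups
    have coatom_above : ∀ K : Subgroup Q, K ≠ ⊤ → ∃ M : Subgroup Q, IsCoatom M ∧ K ≤ M := by
      intro K hK
      obtain ⟨M, hM, hmax⟩ := Set.Finite.exists_maximalFor (id : Subgroup Q → Subgroup Q)
        {L : Subgroup Q | K ≤ L ∧ L ≠ ⊤} (Set.toFinite _) ⟨K, le_refl K, hK⟩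
      refine ⟨M, ⟨hM.2, ?_⟩, hM.1⟩
      intro L hML
      by_contra hL
      exact hML.not_ge (hmax ⟨hM.1.trans hML.le, hL⟩ hML.le)
    have coatom_normal : ∀ M : Subgroup Q, IsCoatom M → M.Normal := by
      haveI : Group.IsNilpotent Q := hpg.isNilpotent
      have hnc : NormalizerCondition Q := normalizerCondition_of_isNilpotent
      exact fun M hM => Subgroup.NormalizerCondition.normal_of_coatom M hnc hM
    -- the quotient by a coatom has exponent p
    have quot_exp : ∀ M : Subgroup Q, IsCoatom M → ∀ g : Q, g ^ p ∈ M := by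
      intro M hM g
      haveI := coatom_normal M hM
      suffices hq : ∀ gq : Q ⧸ M, gq ^ p = 1 by
        have := hq ((QuotientGroup.mk' M) g)
        rw [← map_pow] at this
        exact (QuotientGroup.eq_one_iff _).mp this
      have htop : ∀ g' : Q ⧸ M, g' ≠ 1 → Subgroup.zpowers g' = ⊤ := by
        intro g' hg'
        set K := Subgroup.comap (QuotientGroup.mk' M) (Subgroup.zpowers g') with hK
        have hMK : M ≤ K := by
          intro m hm
          simp only [hK, Subgroup.mem_comap]
          have : (QuotientGroup.mk' M) m = 1 := (QuotientGroup.eq_one_iff m).mpr hm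
          rw [this]
          exact one_mem _
        obtain ⟨q, hq⟩ := QuotientGroup.mk'_surjective M g'
        have hqK : q ∈ K := by
          simp only [hK, Subgroup.mem_comap, hq]
          exact Subgroup.mem_zpowers g'
        have hqM : q ∉ M := fun hqm => hg' (by rw [← hq]; exact (QuotientGroup.eq_one_iff q).mpr hqm)
        have hlt : M < K := lt_of_le_of_ne hMK (fun he => hqM (he ▸ hqK))
        have hKtop : K = ⊤ := hM.2 K hlt
        apply Subgroup.comap_injective (QuotientGroup.mk'_surjective M)
        rw [← hK, hKtop, Subgroup.comap_top]
      intro gq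
      by_cases hg1 : gq = 1
      · rw [hg1, one_pow]
      by_contra hgp
      have h1 := htop gq hg1
      have h2 := htop (gq ^ p) hgp
      have hord : ∀ g' : Q ⧸ M, Subgroup.zpowers g' = ⊤ → orderOf g' = Nat.card (Q ⧸ M) := by
        intro g' hg'
        rw [← Nat.card_zpowers, hg', Subgroup.card_top]
      have heq : orderOf (gq ^ p) = orderOf gq := by rw [hord _ h2, hord _ h1]
      have hdvd : p ∣ orderOf gq := by
        haveI := hpg.to_quotient M
        obtain ⟨j, hj⟩ := (IsPGroup.iff_orderOf.mp (hpg.to_quotient M)) gq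
        rcases j with _ | j
        · rw [pow_zero] at hj
          exact absurd (orderOf_eq_one_iff.mp hj) hg1
        · rw [hj]
          exact dvd_pow_self p (Nat.succ_ne_zero j)
      rw [orderOf_pow, Nat.gcd_eq_right hdvd] at heq
      have hpos : 0 < orderOf gq := orderOf_pos gq
      have := Nat.div_lt_self hpos hp.one_lt
      omega
    -- not cyclic: no element generates
    have hnt : ∀ g : Q, Subgroup.zpowers g ≠ ⊤ := by
      intro g hg
      have hall : ∀ q : Q, q ∈ Subgroup.zpowers g := fun q => by
        rw [hg]; exact Subgroup.mem_top q
      exact hQ ⟨⟨g, hall⟩⟩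
    -- generator extraction
    have gen_of_cyclic : ∀ K : Subgroup Q, K ≠ ⊤ → ∃ g : Q, Subgroup.zpowers g = K := by
      intro K hK
      obtain ⟨⟨g, hgK⟩, hgen⟩ := (proper_cyclic K hK).exists_generator
      refine ⟨g, le_antisymm (Subgroup.zpowers_le.mpr hgK) ?_⟩
      intro m hm
      obtain ⟨j, hj⟩ := Subgroup.mem_zpowers_iff.mp (hgen ⟨m, hm⟩)
      have : (g : Q) ^ j = m := by
        have := congrArg Subtype.val hj
        simpa using this
      exact this ▸ Subgroup.zpow_mem _ (Subgroup.mem_zpowers g) j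
    -- pick coatoms M and N with generators x, y
    have hbot : (⊥ : Subgroup Q) ≠ ⊤ := by
      intro he
      obtain ⟨q, hq⟩ := exists_ne (1 : Q)
      apply hq
      have hq2 : q ∈ (⊥ : Subgroup Q) := by rw [he]; exact Subgroup.mem_top q
      simpa using hq2
    obtain ⟨M, hMco, -⟩ := coatom_above ⊥ hbot
    obtain ⟨x, hMx⟩ := gen_of_cyclic M hMco.1
    have hy₀ : ∃ y₀ : Q, y₀ ∉ M := by
      by_contra hall
      push_neg at hall
      exact hMco.1 ((Subgroup.eq_top_iff' M).mpr hall)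
    obtain ⟨y₀, hy₀M⟩ := hy₀
    obtain ⟨N, hNco, hyN⟩ := coatom_above (Subgroup.zpowers y₀) (hnt y₀)
    obtain ⟨y, hNy⟩ := gen_of_cyclic N hNco.1
    have hNM : N ≠ M := fun he => hy₀M (he ▸ hyN (Subgroup.mem_zpowers y₀))
    have hyM : y ∉ M := by
      intro hyM
      have hNleM : N ≤ M := hNy ▸ Subgroup.zpowers_le.mpr hyM
      rcases lt_or_eq_of_le hNleM with hlt | he
      · exact hMco.1 (hNco.2 M hlt)
      · exact hNM he
    have hxN : x ∉ N := by
      intro hxN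
      have hMleN : M ≤ N := hMx ▸ Subgroup.zpowers_le.mpr hxN
      rcases lt_or_eq_of_le hMleN with hlt | he
      · exact hNco.1 (hMco.2 N hlt)
      · exact hNM he.symm
    -- x and y do not commute
    have hxy : x * y ≠ y * x := by
      intro hcom
      have hsup : Subgroup.zpowers x ⊔ Subgroup.zpowers y = ⊤ := by
        have hlt : M < Subgroup.zpowers x ⊔ Subgroup.zpowers y := by
          refine lt_of_le_of_ne (by rw [← hMx]; exact le_sup_left) ?_
          intro he
          apply hyM
          have hy' : y ∈ Subgroup.zpowers x ⊔ Subgroup.zpowers y :=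
            Subgroup.mem_sup_right (Subgroup.mem_zpowers y)
          rw [← he] at hy'
          exact hy'
        exact hMco.2 _ hlt
      have hcent : ∀ g : Q, Commute x g ∧ Commute y g := by
        intro g
        have h1 : Subgroup.zpowers x ⊔ Subgroup.zpowers y ≤
            Subgroup.centralizer {x} ⊓ Subgroup.centralizer {y} := by
          refine sup_le (Subgroup.zpowers_le.mpr ?_) (Subgroup.zpowers_le.mpr ?_)
          · exact Subgroup.mem_inf.mpr
              ⟨Subgroup.mem_centralizer_singleton_iff.mpr rfl,
               Subgroup.mem_centralizer_singleton_iff.mpr hcom⟩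
          · exact Subgroup.mem_inf.mpr
              ⟨Subgroup.mem_centralizer_singleton_iff.mpr hcom.symm,
               Subgroup.mem_centralizer_singleton_iff.mpr rfl⟩
        have h2 := h1 (hsup ▸ Subgroup.mem_top g)
        rw [Subgroup.mem_inf] at h2
        exact ⟨(Subgroup.mem_centralizer_singleton_iff.mp h2.1).symm,
               (Subgroup.mem_centralizer_singleton_iff.mp h2.2).symm⟩
      apply hab
      have hacen : ∀ g : Q, Commute a g := by
        intro g
        have h1 : Subgroup.zpowers x ⊔ Subgroup.zpowers y ≤ Subgroup.centralizer {a} := by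
          refine sup_le (Subgroup.zpowers_le.mpr ?_) (Subgroup.zpowers_le.mpr ?_)
          · exact Subgroup.mem_centralizer_singleton_iff.mpr ((hcent a).1.eq)
          · exact Subgroup.mem_centralizer_singleton_iff.mpr ((hcent a).2.eq)
        have h2 : g ∈ Subgroup.centralizer {a} := h1 (hsup ▸ Subgroup.mem_top g)
        exact (Subgroup.mem_centralizer_singleton_iff.mp h2).symm
      exact (hacen b).eq
    -- powers land in the other coatom
    have hxpN : x ^ p ∈ N := quot_exp N hNco x
    have hypM : y ^ p ∈ M := quot_exp M hMco y
    have hxpM : x ^ p ∈ M := by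
      rw [← hMx]
      exact pow_mem (Subgroup.mem_zpowers x) p
    have hypN : y ^ p ∈ N := by
      rw [← hNy]
      exact pow_mem (Subgroup.mem_zpowers y) p
    have hMn : (Subgroup.zpowers x).Normal := by rw [hMx]; exact coatom_normal M hMco
    have hNn : (Subgroup.zpowers y).Normal := by rw [hNy]; exact coatom_normal N hNco
    have hy : y ∉ Subgroup.zpowers x := by rw [hMx]; exact hyM
    have hx : x ∉ Subgroup.zpowers y := by rw [hNy]; exact hxN
    have hxpN' : x ^ p ∈ Subgroup.zpowers y := by rw [hNy]; exact hxpN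
    have hypM' : y ^ p ∈ Subgroup.zpowers x := by rw [hMx]; exact hypM
    have hZne : M ⊓ N ≠ ⊤ := by
      intro he
      apply hMco.1
      have h1 : M ⊓ N ≤ M := inf_le_left
      rw [he] at h1
      exact top_le_iff.mp h1
    haveI hZcyc : IsCyclic ↥(M ⊓ N) := proper_cyclic (M ⊓ N) hZne
    obtain ⟨i, hi⟩ := IsPGroup.iff_orderOf.mp hpg (x ^ p)
    obtain ⟨j, hj⟩ := IsPGroup.iff_orderOf.mp hpg (y ^ p)
    set za : ↥(M ⊓ N) := ⟨x ^ p, Subgroup.mem_inf.mpr ⟨hxpM, hxpN⟩⟩ with hza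
    set zb : ↥(M ⊓ N) := ⟨y ^ p, Subgroup.mem_inf.mpr ⟨hypM, hypN⟩⟩ with hzb
    exfalso
    rcases le_total j i with hij | hij
    · have hdvd : orderOf (y ^ p) ∣ p ^ i := by rw [hj]; exact pow_dvd_pow p hij
      have hb : zb ^ orderOf za = 1 := by
        have hoa : orderOf za = p ^ i := by rw [Subgroup.orderOf_mk, hi]
        rw [hoa]
        refine Subtype.ext ?_
        push_cast
        exact orderOf_dvd_iff_pow_eq_one.mp hdvd
      obtain ⟨k, hk⟩ := Subgroup.mem_zpowers_iff.mp
        (mem_zpowers_of_pow_orderOf_eq_one za zb hb)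
      have hk' : (x ^ p) ^ k = y ^ p := by
        have := congrArg Subtype.val hk
        simpa using this
      exact key_contra hp hodd h x y hy hMn hNn hxpN' hxy k hk'
    · have hdvd : orderOf (x ^ p) ∣ p ^ j := by rw [hi]; exact pow_dvd_pow p hij
      have hb : za ^ orderOf zb = 1 := by
        have hob : orderOf zb = p ^ j := by rw [Subgroup.orderOf_mk, hj]
        rw [hob]
        refine Subtype.ext ?_
        push_cast
        exact orderOf_dvd_iff_pow_eq_one.mp hdvd
      obtain ⟨k, hk⟩ := Subgroup.mem_zpowers_iff.mp
        (mem_zpowers_of_pow_orderOf_eq_one zb za hb)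
      have hk' : (y ^ p) ^ k = x ^ p := by
        have := congrArg Subtype.val hk
        simpa using this
      exact key_contra hp hodd h y x hx hNn hMn hypM' (fun e => hxy e.symm) k hk'

end Main

/-- If every abelian subgroup of a finite group `G` is cyclic, then every Sylow
`p`-subgroup of `G` for an odd prime `p` is cyclic. -/
theorem sylow_cyclic_of_abelian_subgroups_cyclic
    {G : Type*} [Group G] [Finite G]
    (h : ∀ H : Subgroup G, (∀ a ∈ H, ∀ b ∈ H, a * b = b * a) → IsCyclic H)
    (p : ℕ) (hp : p.Prime) (hodd : Odd p) (P : Sylow p G) :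
    IsCyclic (P : Subgroup G) := by
  refine main_aux hp hodd (Nat.card ↥(P : Subgroup G)) ↥(P : Subgroup G) le_rfl P.isPGroup' ?_
  intro H hcom
  haveI := h (H.map (P : Subgroup G).subtype) (by
    intro s hs t ht
    obtain ⟨s', hs', rfl⟩ := Subgroup.mem_map.mp hs
    obtain ⟨t', ht', rfl⟩ := Subgroup.mem_map.mp ht
    rw [← map_mul, ← map_mul, hcom s' hs' t' ht'])
  exact isCyclic_of_surjective
    (Subgroup.equivMapOfInjective H (P : Subgroup G).subtype
      (Subgroup.subtype_injective _)).symm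
    (MulEquiv.surjective _)
end

section
/- Every finite group all of whose Sylow subgroups are cyclic (a Z-group) is metacyclic; more precisely, it admits a presentation G = ⟨σ, τ : σ^m = 1, τ^n = 1, τστ⁻¹ = σ^r⟩ with r^n ≡ 1 (mod m) and gcd(m, n(r−1)) = 1. -/
open Subgroup
open scoped commutatorElement

private lemma zm_pow_p_dvd (p : ℕ) {x : ℤ} (h : (p:ℤ) ∣ x - 1) :
    ∀ a : ℕ, (p:ℤ)^a ∣ x^(p^(a-1)) - 1 := by
  intro a
  induction a with
  | zero => simpa using one_dvd _
  | succ a ih =>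
    rcases Nat.eq_zero_or_pos a with rfl | ha
    · simpa using h
    · set y : ℤ := x ^ (p^(a-1)) with hy
      have hxy : x ^ (p ^ (a + 1 - 1)) = y ^ p := by
        rw [hy, ← pow_mul, Nat.add_sub_cancel, ← pow_succ, Nat.sub_add_cancel ha]
      have hpy : (p:ℤ) ∣ y - 1 := dvd_trans (dvd_pow_self (p:ℤ) ha.ne') ih
      have hsum : (p:ℤ) ∣ ∑ i ∈ Finset.range p, y ^ i := by
        have h2 : (p:ℤ) ∣ ∑ i ∈ Finset.range p, (y ^ i - 1) :=
          Finset.dvd_sum fun i _ => dvd_trans hpy (by simpa using sub_dvd_pow_sub_pow y 1 i)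
        have h3 : (∑ i ∈ Finset.range p, y ^ i) = (∑ i ∈ Finset.range p, (y ^ i - 1)) + p := by
          rw [Finset.sum_sub_distrib]; simp
        rw [h3]
        exact dvd_add h2 (dvd_refl _)
      calc (p:ℤ)^(a+1) = (p:ℤ) * (p:ℤ)^a := by ring
      _ ∣ (∑ i ∈ Finset.range p, y ^ i) * (y - 1) := mul_dvd_mul hsum ih
      _ = y ^ p - 1 := by simpa using geom_sum_mul y p
      _ = x ^ (p ^ (a + 1 - 1)) - 1 := by rw [hxy]

private lemma modeq_prime_pow {p a n r : ℕ} (hp : p.Prime) (h1 : 1 ≤ r) (hq : p ∣ r - 1)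
    (hrn : r ^ n ≡ 1 [MOD p ^ a]) (hpn : ¬ p ∣ n) : p ^ a ∣ r - 1 := by
  rcases Nat.eq_zero_or_pos a with rfl | _
  · simpa using one_dvd _
  have hpr : ¬ p ∣ r := by
    intro hdvd
    have : p ∣ 1 := (Nat.sub_sub_self h1) ▸ Nat.dvd_sub hdvd hq
    exact hp.one_lt.ne' (Nat.dvd_one.mp this)
  have hcop : r.Coprime (p ^ a) := Nat.Coprime.pow_right a (hp.coprime_iff_not_dvd.mpr hpr).symm
  set u : (ZMod (p ^ a))ˣ := ZMod.unitOfCoprime r hcop with hu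
  have hu1 : (u : ZMod (p ^ a)) = (r : ZMod (p ^ a)) := ZMod.coe_unitOfCoprime r hcop
  have hun : u ^ n = 1 := by
    ext
    push_cast [hu1]
    rw [← Nat.cast_pow, ← Nat.cast_one (R := ZMod (p ^ a)), ZMod.natCast_eq_natCast_iff]
    exact hrn
  have hup : u ^ (p ^ (a - 1)) = 1 := by
    have hz : (p:ℤ) ∣ (r:ℤ) - 1 := by
      have := Int.natCast_dvd_natCast.mpr hq
      rwa [Nat.cast_sub h1] at this
    have hzz := zm_pow_p_dvd p hz a
    have : (r : ℕ) ^ (p ^ (a - 1)) ≡ 1 [MOD p ^ a] := by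
      rw [Nat.ModEq.comm, Nat.modEq_iff_dvd]
      push_cast
      exact_mod_cast hzz
    ext
    push_cast [hu1]
    rw [← Nat.cast_pow, ← Nat.cast_one (R := ZMod (p ^ a)), ZMod.natCast_eq_natCast_iff]
    exact this
  have hord : orderOf u ∣ Nat.gcd n (p ^ (a - 1)) :=
    Nat.dvd_gcd (orderOf_dvd_of_pow_eq_one hun) (orderOf_dvd_of_pow_eq_one hup)
  have hgcd : Nat.gcd n (p ^ (a - 1)) = 1 := by
    have : n.Coprime (p ^ (a-1)) := Nat.Coprime.pow_right _ (hp.coprime_iff_not_dvd.mpr hpn).symm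
    exact this
  rw [hgcd, Nat.dvd_one] at hord
  have : u = 1 := orderOf_eq_one_iff.mp hord
  have : (r : ZMod (p ^ a)) = ((1 : ℕ) : ZMod (p ^ a)) := by
    rw [← hu1, this]; simp
  rw [ZMod.natCast_eq_natCast_iff] at this
  exact (Nat.modEq_iff_dvd' h1).mp this.symm

private lemma isCyclic_of_comm_zgroup {A : Type*} [Group A] [Finite A] [IsZGroup A]
    (hc : ∀ a b : A, a * b = b * a) : IsCyclic A := by
  letI : CommGroup A := { (inferInstance : Group A) with mul_comm := hc }
  have hee : Monoid.ExponentExists A :=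
    Monoid.exponent_ne_zero.mp Monoid.exponent_ne_zero_of_finite
  obtain ⟨g, hg⟩ := Monoid.exists_orderOf_eq_exponent hee
  have hcard : Monoid.exponent A = Nat.card A := by
    have h1 : Monoid.exponent A ∣ Nat.card A := Group.exponent_dvd_nat_card
    have h2 : Nat.card A ∣ Monoid.exponent A := by
      have hA0 : Nat.card A ≠ 0 := Nat.card_pos.ne'
      have he0 : Monoid.exponent A ≠ 0 := Monoid.exponent_ne_zero_of_finite
      rw [← Nat.factorization_le_iff_dvd hA0 he0]
      intro p
      by_cases hp : p.Prime
      · haveI : Fact p.Prime := ⟨hp⟩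
        obtain ⟨P⟩ : Nonempty (Sylow p A) := inferInstance
        haveI : IsCyclic (P : Subgroup A) := IsZGroup.isZGroup p hp P
        obtain ⟨x, hx⟩ := IsCyclic.exists_generator (α := (P : Subgroup A))
        have hox : orderOf x = p ^ (Nat.card A).factorization p := by
          rw [orderOf_eq_card_of_forall_mem_zpowers hx, P.card_eq_multiplicity]
        have hoxA : orderOf ((x : A)) = p ^ (Nat.card A).factorization p := by
          rw [← hox]
          exact orderOf_injective (P : Subgroup A).subtype (P : Subgroup A).subtype_injective x
        have hdvd : p ^ (Nat.card A).factorization p ∣ Monoid.exponent A :=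
          hoxA ▸ Monoid.order_dvd_exponent (x : A)
        exact (hp.pow_dvd_iff_le_factorization he0).mp hdvd
      · simp [Nat.factorization_eq_zero_of_not_prime _ hp]
    exact Nat.dvd_antisymm h1 h2
  exact isCyclic_of_orderOf_eq_card g (hg.trans hcard)

private lemma mulAut_comm_of_isCyclic {H : Type*} [Group H] [IsCyclic H] (α β : MulAut H) :
    α * β = β * α := by
  obtain ⟨g, hg⟩ := IsCyclic.exists_generator (α := H)
  obtain ⟨za, hza⟩ := hg (α g)
  obtain ⟨zb, hzb⟩ := hg (β g)
  simp only at hza hzb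
  have key : α (β g) = β (α g) := by
    rw [← hza, ← hzb, map_zpow, map_zpow, ← hza, ← hzb, ← zpow_mul, ← zpow_mul, mul_comm]
  ext x
  obtain ⟨zx, hzx⟩ := hg x
  simp only at hzx
  simp only [MulAut.mul_apply]
  rw [← hzx, map_zpow, map_zpow, map_zpow, map_zpow, key]

private lemma commutator_le_of_two_gen {G : Type*} [Group G] {x y : G}
    (htop : zpowers x ⊔ zpowers y = ⊤) {W : Subgroup G} [W.Normal]
    (h : ⁅y, x⁆ ∈ W) : commutator G ≤ W := by
  set f := QuotientGroup.mk' W with hf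
  have hfsurj : Function.Surjective f := QuotientGroup.mk'_surjective W
  set S : Set (G ⧸ W) := {f x, f y} with hS
  have h1 : (⊤ : Subgroup (G ⧸ W)) = Subgroup.closure S := by
    rw [hS, ← Set.singleton_union, Subgroup.closure_union, ← zpowers_eq_closure,
      ← zpowers_eq_closure, ← MonoidHom.map_zpowers, ← MonoidHom.map_zpowers,
      ← Subgroup.map_sup, htop, Subgroup.map_top_of_surjective f hfsurj]
  have hStop : ∀ q : G ⧸ W, q ∈ Subgroup.closure S := fun q => h1 ▸ trivial
  have hcomm : ∀ a b : G ⧸ W, Commute a b := by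
    have hxy : Commute (f x) (f y) := by
      rw [← commutatorElement_eq_one_iff_commute, ← map_commutatorElement]
      have hmem : ⁅x, y⁆ ∈ W := by
        have := (W.inv_mem_iff (x := ⁅y, x⁆)).mpr h
        rwa [commutatorElement_inv] at this
      exact (QuotientGroup.eq_one_iff _).mpr hmem
    have hSS : ∀ a ∈ S, ∀ b ∈ S, Commute a b := by
      intro a ha b hb
      rcases ha with rfl | ha <;> rcases hb with rfl | hb
      · exact Commute.refl _
      · rw [Set.mem_singleton_iff] at hb; subst hb; exact hxy
      · rw [Set.mem_singleton_iff] at ha; subst ha; exact hxy.symm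
      · rw [Set.mem_singleton_iff] at ha hb; subst ha; subst hb; exact Commute.refl _
    intro a b
    have hbc : b ∈ Subgroup.centralizer S :=
      (Subgroup.closure_le _).mpr
        (fun s hs => Subgroup.mem_centralizer_iff.mpr fun c hc => (hSS s hs c hc).symm)
        (hStop b)
    have hac : a ∈ Subgroup.centralizer {b} := by
      refine (Subgroup.closure_le _).mpr ?_ (hStop a)
      intro s hs
      refine Subgroup.mem_centralizer_iff.mpr ?_
      intro c hc
      rcases hc with rfl
      exact (Subgroup.mem_centralizer_iff.mp hbc s hs).symm
    exact (Subgroup.mem_centralizer_iff.mp hac b rfl).symm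
  rw [_root_.commutator_def]
  refine (Subgroup.commutator_le).mpr fun g1 _ g2 _ => ?_
  have : f ⁅g1, g2⁆ = 1 := by
    rw [map_commutatorElement]
    exact commutatorElement_eq_one_iff_commute.mpr (hcomm _ _)
  exact (QuotientGroup.eq_one_iff _).mp this

private lemma conj_pow_pow {G : Type*} [Group G] {σ τ : G} {r : ℕ}
    (h : τ * σ * τ⁻¹ = σ ^ r) (j : ℕ) : τ ^ j * σ * (τ ^ j)⁻¹ = σ ^ (r ^ j) := by
  induction j with
  | zero => simp
  | succ j ih =>
    have hstep : τ ^ (j + 1) * σ * (τ ^ (j + 1))⁻¹ = τ ^ j * (τ * σ * τ⁻¹) * (τ ^ j)⁻¹ := by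
      rw [pow_succ]
      group
    rw [hstep, h, ← conj_pow, ih, ← pow_mul, ← pow_succ]

private lemma conj_pow_pow' {G : Type*} [Group G] {σ τ : G} {r : ℕ}
    (h : τ * σ * τ⁻¹ = σ ^ r) (j e : ℕ) :
    τ ^ j * σ ^ e * (τ ^ j)⁻¹ = (σ ^ e) ^ (r ^ j) := by
  rw [← conj_pow, conj_pow_pow h j, ← pow_mul, ← pow_mul, mul_comm]

private lemma zpowers_pow_normal {G : Type*} [Group G] [Finite G] {σ τ : G}
    (htop : zpowers σ ⊔ zpowers τ = ⊤) {r : ℕ}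
    (h : τ * σ * τ⁻¹ = σ ^ r) (e : ℕ) : (zpowers (σ ^ e)).Normal := by
  rw [← Subgroup.normalizer_eq_top_iff, eq_top_iff, ← htop, sup_le_iff]
  have hfixσ : ∀ z : ℤ, σ * (σ ^ e) ^ z * σ⁻¹ = (σ ^ e) ^ z := by
    intro z
    have hc : Commute σ ((σ ^ e) ^ z) := ((Commute.refl σ).pow_right e).zpow_right z
    rw [hc.eq, mul_inv_cancel_right]
  set n := orderOf τ with hn
  have hn1 : 1 ≤ n := orderOf_pos τ
  have hτinv : τ⁻¹ = τ ^ (n - 1) := by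
    have hτ1 : τ ^ (n - 1) * τ = 1 := by
      rw [← pow_succ, Nat.sub_add_cancel hn1, pow_orderOf_eq_one]
    exact (eq_inv_of_mul_eq_one_left hτ1).symm
  have hfwd : τ * σ ^ e * τ⁻¹ = (σ ^ e) ^ r := by
    rw [← conj_pow, h, ← pow_mul, ← pow_mul, mul_comm]
  have hbwd : τ⁻¹ * σ ^ e * τ = (σ ^ e) ^ (r ^ (n - 1)) := by
    have h2 := conj_pow_pow' h (n - 1) e
    rwa [← hτinv, inv_inv] at h2
  constructor
  · rw [zpowers_le]
    intro g
    constructor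
    · rintro ⟨z, rfl⟩
      exact ⟨z, (hfixσ z).symm⟩
    · rintro ⟨z, hz⟩
      simp only at hz
      have h3 : σ * ((σ ^ e) ^ z) * σ⁻¹ = σ * g * σ⁻¹ := (hfixσ z).trans hz
      exact ⟨z, mul_left_cancel (mul_right_cancel h3)⟩
  · rw [zpowers_le]
    intro g
    constructor
    · rintro ⟨z, rfl⟩
      refine ⟨(r : ℤ) * z, ?_⟩
      simp only
      calc (σ ^ e) ^ ((r:ℤ) * z) = ((σ ^ e) ^ r) ^ z := by rw [← zpow_natCast (σ ^ e) r, ← zpow_mul]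
      _ = (τ * σ ^ e * τ⁻¹) ^ z := by rw [hfwd]
      _ = τ * (σ ^ e) ^ z * τ⁻¹ := conj_zpow
    · rintro ⟨z, hz⟩
      simp only at hz
      have hg : g = τ⁻¹ * (σ ^ e) ^ z * τ := by rw [hz]; group
      refine ⟨((r ^ (n - 1) : ℕ) : ℤ) * z, ?_⟩
      simp only
      rw [hg]
      calc (σ ^ e) ^ (((r ^ (n - 1) : ℕ) : ℤ) * z) = ((σ ^ e) ^ (r ^ (n - 1))) ^ z := by
            rw [← zpow_natCast (σ ^ e) (r ^ (n - 1)), ← zpow_mul]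
      _ = (τ⁻¹ * σ ^ e * τ) ^ z := by rw [hbwd]
      _ = τ⁻¹ * (σ ^ e) ^ z * τ := by
            have h5 : (τ⁻¹ * σ ^ e * (τ⁻¹)⁻¹) ^ z = τ⁻¹ * (σ ^ e) ^ z * (τ⁻¹)⁻¹ := conj_zpow
            rwa [inv_inv] at h5

private lemma zpowers_isCyclic {G : Type*} [Group G] (x : G) : IsCyclic (zpowers x) := by
  refine ⟨⟨⟨x, mem_zpowers x⟩, ?_⟩⟩
  rintro ⟨y, z, rfl⟩
  exact ⟨z, by ext; simp⟩

private lemma core_struct {G : Type*} [Group G] [Finite G] {σ τ : G}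
    (hnorm : (zpowers σ).Normal) (htop : zpowers σ ⊔ zpowers τ = ⊤) (hσ : σ ≠ 1) :
    ∃ r : ℕ, 1 ≤ r ∧ τ * σ * τ⁻¹ = σ ^ r ∧
      r ^ (orderOf τ) ≡ 1 [MOD orderOf σ] ∧ commutator G = zpowers (σ ^ (r - 1)) := by
  set m := orderOf σ with hm
  have hm0 : 0 < m := orderOf_pos σ
  obtain ⟨z, hz⟩ := hnorm.conj_mem σ (mem_zpowers σ) τ
  simp only at hz
  set r : ℕ := (z % (m : ℤ)).toNat with hr
  have hzr : σ ^ (r : ℤ) = σ ^ z := by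
    rw [hr, Int.toNat_of_nonneg (Int.emod_nonneg z (by exact_mod_cast hm0.ne'))]
    exact zpow_mod_orderOf σ z
  have hconj : τ * σ * τ⁻¹ = σ ^ r := by
    rw [← hz, ← hzr, zpow_natCast]
  have hr1 : 1 ≤ r := by
    rcases Nat.eq_zero_or_pos r with h0 | h1
    · exfalso
      apply hσ
      have : σ = τ⁻¹ * (τ * σ * τ⁻¹) * τ := by group
      rw [this, hconj, h0, pow_zero]
      group
    · exact h1
  have hmod : r ^ (orderOf τ) ≡ 1 [MOD m] := by
    have h6 := conj_pow_pow hconj (orderOf τ)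
    rw [pow_orderOf_eq_one] at h6
    simp only [one_mul, inv_one, mul_one] at h6
    have h7 : σ ^ (r ^ orderOf τ) = σ ^ 1 := by rw [← h6, pow_one]
    exact pow_eq_pow_iff_modEq.mp h7
  have hcommel : ⁅τ, σ⁆ = σ ^ (r - 1) := by
    rw [commutatorElement_def, mul_assoc]
    rw [← mul_assoc, hconj]
    have : σ ^ r = σ ^ (r - 1) * σ := by rw [← pow_succ, Nat.sub_add_cancel hr1]
    rw [this, mul_inv_cancel_right]
  haveI hWnorm := zpowers_pow_normal htop hconj (r - 1)
  have hle : commutator G ≤ zpowers (σ ^ (r - 1)) :=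
    commutator_le_of_two_gen htop (hcommel ▸ mem_zpowers (σ ^ (r - 1)))
  have hge : zpowers (σ ^ (r - 1)) ≤ commutator G := by
    rw [zpowers_le, ← hcommel, _root_.commutator_def]
    exact Subgroup.commutator_mem_commutator (Subgroup.mem_top τ) (Subgroup.mem_top σ)
  exact ⟨r, hr1, hconj, hmod, le_antisymm hle hge⟩

private lemma core_commutator {G : Type*} [Group G] [Finite G] {σ τ : G}
    (hnorm : (zpowers σ).Normal) (htop : zpowers σ ⊔ zpowers τ = ⊤)
    (hcop : Nat.Coprime (orderOf σ) (orderOf τ)) :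
    IsCyclic (commutator G) ∧ (Nat.card (commutator G)).Coprime (commutator G).index := by
  by_cases hσ : σ = 1
  · have hbot : commutator G = ⊥ := by
      have hle : commutator G ≤ (⊥ : Subgroup G) :=
        commutator_le_of_two_gen htop (by rw [hσ]; simp)
      exact le_bot_iff.mp hle
    constructor
    · rw [hbot]; exact isCyclic_of_subsingleton
    · rw [hbot, Subgroup.card_bot]
      exact Nat.coprime_one_left _
  obtain ⟨r, hr1, hconj, hmod, hcomm⟩ := core_struct hnorm htop hσ
  set m := orderOf σ with hm
  set n := orderOf τ with hn
  have hm0 : 0 < m := orderOf_pos σ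
  have hn0 : 0 < n := orderOf_pos τ
  set d := Nat.gcd m (r - 1) with hdd
  have hd : d ∣ m := Nat.gcd_dvd_left _ _
  set D := m / d with hD'
  have hd0 : 0 < d := Nat.gcd_pos_of_pos_left _ hm0
  have hDd : D * d = m := Nat.div_mul_cancel hd
  have hD0 : 0 < D := Nat.div_pos (Nat.le_of_dvd hm0 hd) hd0
  have hcardW : Nat.card (commutator G) = D := by
    rw [hcomm, Nat.card_zpowers, orderOf_pow, ← hm, ← hdd]
  -- complement
  haveI := hnorm
  have hdisj : Disjoint (zpowers σ) (zpowers τ) := by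
    rw [disjoint_iff]
    have h1 : Nat.card ↥(zpowers σ ⊓ zpowers τ) ∣ m := by
      have := Subgroup.card_dvd_of_le (inf_le_left : zpowers σ ⊓ zpowers τ ≤ zpowers σ)
      rwa [Nat.card_zpowers] at this
    have h2 : Nat.card ↥(zpowers σ ⊓ zpowers τ) ∣ n := by
      have := Subgroup.card_dvd_of_le (inf_le_right : zpowers σ ⊓ zpowers τ ≤ zpowers τ)
      rwa [Nat.card_zpowers] at this
    exact Subgroup.card_eq_one.mp (Nat.dvd_one.mp (hcop ▸ Nat.dvd_gcd h1 h2))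
  have hcompl : (zpowers σ).IsComplement' (zpowers τ) :=
    isComplement'_of_disjoint_and_mul_eq_univ hdisj
      (by rw [← Subgroup.normal_mul, htop, Subgroup.coe_top])
  have hcardG : m * n = Nat.card G := by
    rw [← hcompl.card_mul, Nat.card_zpowers, Nat.card_zpowers]
  have hindex : (commutator G).index = n * d := by
    have h1 : (commutator G).index * Nat.card (commutator G) = Nat.card G :=
      Subgroup.index_mul_card _
    rw [hcardW, ← hcardG] at h1
    have h2 : (n * d) * D = m * n := by
      calc (n * d) * D = n * (D * d) := by ring
      _ = n * m := by rw [hDd]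
      _ = m * n := by ring
    exact Nat.eq_of_mul_eq_mul_right hD0 (h1.trans h2.symm)
  have hcopDnd : Nat.Coprime D (n * d) := by
    by_contra hno
    set g := Nat.gcd D (n * d) with hg
    have hg1 : g ≠ 1 := hno
    set q := g.minFac with hq'
    have hq : q.Prime := Nat.minFac_prime hg1
    have hqD : q ∣ D := (Nat.minFac_dvd g).trans (Nat.gcd_dvd_left _ _)
    have hqnd : q ∣ n * d := (Nat.minFac_dvd g).trans (Nat.gcd_dvd_right _ _)
    have hqm : q ∣ m := hqD.trans ⟨d, hDd.symm⟩
    have hqn : ¬ q ∣ n := by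
      intro hqn
      have : q ∣ 1 := hcop ▸ Nat.dvd_gcd hqm hqn
      exact hq.one_lt.ne' (Nat.dvd_one.mp this)
    have hqd : q ∣ d := (hq.dvd_mul.mp hqnd).resolve_left hqn
    have hqr1 : q ∣ r - 1 := hqd.trans (Nat.gcd_dvd_right _ _)
    set a := m.factorization q with ha
    have hqam : q ^ a ∣ m := Nat.ordProj_dvd m q
    have hmodqa : r ^ n ≡ 1 [MOD q ^ a] := hmod.of_dvd hqam
    have hqar1 : q ^ a ∣ r - 1 := modeq_prime_pow hq hr1 hqr1 hmodqa hqn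
    have hqad : q ^ a ∣ d := Nat.dvd_gcd hqam hqar1
    have : q ^ (a + 1) ∣ m := by
      have := mul_dvd_mul hqD hqad
      rw [hDd] at this
      rwa [pow_succ, mul_comm (q ^ a) q]
    exact Nat.pow_succ_factorization_not_dvd hm0.ne' hq this
  refine ⟨?_, ?_⟩
  · rw [hcomm]; exact zpowers_isCyclic _
  · rw [hcardW, hindex]; exact hcopDnd

private lemma min_sylow_norm_le_cent {G : Type*} [Group G] [Finite G] [IsZGroup G] {p : ℕ}
    [hpf : Fact p.Prime] (hmin : p = (Nat.card G).minFac) (P : Sylow p G) :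
    Subgroup.normalizer ((P : Subgroup G) : Set G) ≤ Subgroup.centralizer ((P : Subgroup G) : Set G) := by
  have hp : p.Prime := hpf.out
  have hcard1 : Nat.card G ≠ 1 := by
    intro h1
    have : p ∣ 1 := h1 ▸ hmin ▸ Nat.minFac_dvd _
    exact hp.one_lt.ne' (Nat.dvd_one.mp this)
  haveI : IsCyclic (P : Subgroup G) := IsZGroup.isZGroup p hp P
  haveI : IsMulCommutative (P : Subgroup G) :=
    ⟨⟨fun a b => (IsCyclic.commGroup (α := (P : Subgroup G))).mul_comm a b⟩⟩
  set H := (P : Subgroup G) with hH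
  set N := Subgroup.normalizer (H : Set G) with hN
  set f := H.normalizerMonoidHom with hf
  have hker : f.ker = (Subgroup.centralizer (H : Set G)).subgroupOf N := H.normalizerMonoidHom_ker
  -- suffices to show the index of ker f in N is 1
  suffices hsuff : f.ker.index = 1 by
    rw [Subgroup.index_eq_one, hker] at hsuff
    exact (Subgroup.subgroupOf_eq_top).mp hsuff
  by_contra hne
  have hidx0 : f.ker.index ≠ 0 := Subgroup.index_ne_zero_of_finite
  set q := f.ker.index.minFac with hq'
  have hq : q.Prime := Nat.minFac_prime hne
  have hqi : q ∣ f.ker.index := Nat.minFac_dvd _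
  -- q divides |Aut H| = totient (card H)
  have hiaut : f.ker.index ∣ Nat.card (MulAut H) := by
    have h1 : f.ker.index = Nat.card (N ⧸ f.ker) := rfl
    have h2 : Nat.card (N ⧸ f.ker) = Nat.card f.range :=
      Nat.card_congr (QuotientGroup.quotientKerEquivRange f).toEquiv
    rw [h1, h2]
    exact Subgroup.card_subgroup_dvd_card _
  have htot : Nat.card (MulAut H) = Nat.totient (Nat.card H) := IsCyclic.card_mulAut H
  set k := (Nat.card G).factorization p with hk
  have hcardH : Nat.card H = p ^ k := P.card_eq_multiplicity
  have hk1 : 1 ≤ k := by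
    rw [hk]
    have hpd : p ∣ Nat.card G := hmin ▸ Nat.minFac_dvd _
    have := (hp.pow_dvd_iff_le_factorization (Nat.card_pos (α := G)).ne').mp
      (pow_one p ▸ hpd)
    omega
  have hqtot : q ∣ p ^ (k - 1) * (p - 1) := by
    have := hqi.trans hiaut
    rwa [htot, hcardH, Nat.totient_prime_pow hp hk1] at this
  -- q divides card G
  have hqG : q ∣ Nat.card G := by
    have h1 : f.ker.index ∣ Nat.card N := Subgroup.index_dvd_card _
    exact (hqi.trans h1).trans (Subgroup.card_subgroup_dvd_card N)
  -- p does not divide the index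
  have hpne : ¬ p ∣ f.ker.index := by
    intro hpd
    have h1 : Nat.card H ∣ Nat.card f.ker := by
      have hle : H.subgroupOf N ≤ f.ker := by
        rw [hker]
        intro x hx
        rw [Subgroup.mem_subgroupOf] at hx ⊢
        exact Subgroup.le_centralizer H hx
      have h2 := Subgroup.card_dvd_of_le hle
      have h3 : Nat.card (H.subgroupOf N) = Nat.card H :=
        Nat.card_congr (Subgroup.subgroupOfEquivOfLe Subgroup.le_normalizer).toEquiv
      rwa [h3] at h2
    have h4 : f.ker.index * Nat.card f.ker = Nat.card N := Subgroup.index_mul_card _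
    have h5 : p ^ (k + 1) ∣ Nat.card G := by
      have h6 : p * p ^ k ∣ f.ker.index * Nat.card f.ker :=
        mul_dvd_mul hpd (hcardH ▸ h1)
      rw [h4] at h6
      have h7 : Nat.card N ∣ Nat.card G := Subgroup.card_subgroup_dvd_card N
      have := h6.trans h7
      rwa [← pow_succ'] at this
    exact Nat.pow_succ_factorization_not_dvd (Nat.card_pos (α := G)).ne' hp (hk ▸ h5)
  -- hence q ∣ p - 1, so q < p, contradicting minimality
  have hqp : q ≠ p := fun h => hpne (h ▸ hqi)
  have hq1 : q ∣ p - 1 := by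
    rcases hq.dvd_mul.mp hqtot with h | h
    · exact absurd ((Nat.prime_dvd_prime_iff_eq hq hp).mp (hq.dvd_of_dvd_pow h)) hqp
    · exact h
  have hqlt : q < p := by
    have hp2 : 2 ≤ p := hp.two_le
    have h1 : q ≤ p - 1 := Nat.le_of_dvd (by omega) hq1
    omega
  have : p ≤ q := hmin ▸ Nat.minFac_le_of_dvd hq.two_le hqG
  omega

universe u

private theorem main_aux_s5 : ∀ (N : ℕ) {G : Type u} [Group G] [Finite G] [IsZGroup G],
    Nat.card G = N →
    IsCyclic (commutator G) ∧ (Nat.card (commutator G)).Coprime (commutator G).index := by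
  intro N
  induction N using Nat.strong_induction_on with
  | _ N ih =>
  intro G _ _ _ hN
  by_cases htriv : Nat.card G = 1
  · haveI : Subsingleton G := (Nat.card_eq_one_iff_unique.mp htriv).1
    have hbot : commutator G = ⊥ := Subsingleton.elim _ _
    refine ⟨?_, ?_⟩
    · rw [hbot]; exact isCyclic_of_subsingleton
    · rw [hbot, Subgroup.card_bot]; exact Nat.coprime_one_left _
  set p := (Nat.card G).minFac with hpdef
  have hp : p.Prime := Nat.minFac_prime htriv
  haveI : Fact p.Prime := ⟨hp⟩
  obtain ⟨P⟩ : Nonempty (Sylow p G) := inferInstance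
  have hPnc := min_sylow_norm_le_cent rfl P
  set K := (MonoidHom.transferSylow P hPnc).ker with hK
  have hKP : K.IsComplement' (P : Subgroup G) :=
    MonoidHom.ker_transferSylow_isComplement' P hPnc
  have hpK : ¬ p ∣ Nat.card K := MonoidHom.not_dvd_card_ker_transferSylow P hPnc
  have hk1 : 1 ≤ (Nat.card G).factorization p := by
    have hpd : p ∣ Nat.card G := Nat.minFac_dvd _
    have := (hp.pow_dvd_iff_le_factorization (Nat.card_pos (α := G)).ne').mp (pow_one p ▸ hpd)
    omega
  have hcardP1 : 1 < Nat.card (P : Subgroup G) := by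
    rw [P.card_eq_multiplicity]
    exact Nat.one_lt_pow (by omega) hp.one_lt
  have hcardmul : Nat.card K * Nat.card (P : Subgroup G) = Nat.card G := hKP.card_mul
  have hKlt : Nat.card K < N := by
    rw [← hN, ← hcardmul]
    exact Nat.lt_mul_iff_one_lt_right Nat.card_pos |>.mpr hcardP1
  haveI hPcyc : IsCyclic (P : Subgroup G) := IsZGroup.isZGroup p hp P
  set φ := (QuotientGroup.mk' K).comp (P : Subgroup G).subtype with hφ
  have hφsurj : Function.Surjective φ := by
    intro q
    obtain ⟨g, rfl⟩ := QuotientGroup.mk'_surjective K q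
    obtain ⟨⟨kk, pp⟩, hkp⟩ := (hKP.existsUnique g).exists
    refine ⟨pp, ?_⟩
    have h1 : (QuotientGroup.mk' K) (kk : G) = 1 := (QuotientGroup.eq_one_iff _).mpr kk.2
    calc φ pp = (QuotientGroup.mk' K) (pp : G) := rfl
    _ = (QuotientGroup.mk' K) ((kk : G) * (pp : G)) := by rw [map_mul, h1, one_mul]
    _ = (QuotientGroup.mk' K) g := by rw [hkp]
  haveI : IsCyclic (G ⧸ K) := isCyclic_of_surjective φ hφsurj
  have hGK : commutator G ≤ K := by
    rw [_root_.commutator_def]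
    refine Subgroup.commutator_le.mpr fun g1 _ g2 _ => ?_
    have h1 : (QuotientGroup.mk' K) ⁅g1, g2⁆ = 1 := by
      rw [map_commutatorElement]
      exact commutatorElement_eq_one_iff_commute.mpr
        ((IsCyclic.commGroup (α := G ⧸ K)).mul_comm _ _)
    exact (QuotientGroup.eq_one_iff _).mp h1
  by_cases hKab : commutator ↥K = ⊥
  · -- K abelian: K is cyclic, use the core lemma
    have hKcomm : ∀ a b : ↥K, a * b = b * a := by
      intro a b
      have h1 : ⁅a, b⁆ ∈ commutator ↥K := by
        rw [_root_.commutator_def]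
        exact Subgroup.commutator_mem_commutator (Subgroup.mem_top a) (Subgroup.mem_top b)
      rw [hKab, Subgroup.mem_bot] at h1
      exact (commutatorElement_eq_one_iff_commute.mp h1).eq
    have hKcyc : IsCyclic ↥K := isCyclic_of_comm_zgroup hKcomm
    obtain ⟨c, hc⟩ := hKcyc.exists_generator
    obtain ⟨t, ht⟩ := hPcyc.exists_generator
    have hctop : zpowers c = (⊤ : Subgroup ↥K) := by rw [eq_top_iff]; exact fun x _ => hc x
    have httop : zpowers t = (⊤ : Subgroup (P : Subgroup G)) := by
      rw [eq_top_iff]; exact fun x _ => ht x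
    have hzc : zpowers ((c : G)) = K := by
      rw [show ((c : G)) = K.subtype c from rfl, ← MonoidHom.map_zpowers, hctop,
        ← MonoidHom.range_eq_map, Subgroup.range_subtype]
    have hzt : zpowers ((t : G)) = (P : Subgroup G) := by
      rw [show ((t : G)) = (P : Subgroup G).subtype t from rfl, ← MonoidHom.map_zpowers, httop,
        ← MonoidHom.range_eq_map, Subgroup.range_subtype]
    have hnorm : (zpowers ((c : G))).Normal := by rw [hzc]; infer_instance
    have htop : zpowers ((c : G)) ⊔ zpowers ((t : G)) = ⊤ := by
      rw [hzc, hzt]; exact hKP.sup_eq_top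
    have hordc : orderOf ((c : G)) = Nat.card K := by
      have h := orderOf_injective K.subtype K.subtype_injective c
      rw [show K.subtype c = (c : G) from rfl] at h
      rw [h, orderOf_eq_card_of_forall_mem_zpowers hc]
    have hordt : orderOf ((t : G)) = Nat.card (P : Subgroup G) := by
      have h := orderOf_injective (P : Subgroup G).subtype (P : Subgroup G).subtype_injective t
      rw [show (P : Subgroup G).subtype t = (t : G) from rfl] at h
      rw [h, orderOf_eq_card_of_forall_mem_zpowers ht]
    have hcop : Nat.Coprime (orderOf ((c : G))) (orderOf ((t : G))) := by
      rw [hordc, hordt, P.card_eq_multiplicity]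
      exact Nat.Coprime.pow_right _ ((hp.coprime_iff_not_dvd.mpr hpK).symm)
    exact core_commutator hnorm htop hcop
  · -- K nonabelian
    obtain ⟨hKc, hKcop⟩ := ih (Nat.card ↥K) hKlt rfl
    set L := Subgroup.map K.subtype (commutator ↥K) with hL
    have hLbot : L ≠ ⊥ := by
      intro h0
      apply hKab
      rw [Subgroup.map_eq_bot_iff, Subgroup.ker_subtype, le_bot_iff] at h0
      exact h0
    have hLG' : L ≤ commutator G := by
      have h1 : L = ⁅K, K⁆ := by
        rw [hL, _root_.commutator_def, Subgroup.map_commutator, ← MonoidHom.range_eq_map,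
          Subgroup.range_subtype]
      rw [h1, _root_.commutator_def]
      exact Subgroup.commutator_mono le_top le_top
    haveI hLnorm : L.Normal := by
      constructor
      intro x hx g
      obtain ⟨y, hy, rfl⟩ := hx
      have h2 : ((MulAut.conjNormal g y : ↥K) : G) = g * (y : G) * g⁻¹ :=
        MulAut.conjNormal_apply g y
      rw [show K.subtype y = (y : G) from rfl, ← h2]
      refine ⟨MulAut.conjNormal g y, ?_, rfl⟩
      have hchar : (commutator ↥K).Characteristic := inferInstance
      have h3 : Subgroup.comap (MulAut.conjNormal (G := G) (H := K) g).toMonoidHom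
          (commutator ↥K) = commutator ↥K :=
        hchar.fixed (MulAut.conjNormal g)
      rw [← h3] at hy
      exact hy
    haveI hLcyc : IsCyclic ↥L := by
      haveI := hKc
      exact isCyclic_of_surjective
        (Subgroup.equivMapOfInjective (commutator ↥K) K.subtype K.subtype_injective)
        (Subgroup.equivMapOfInjective (commutator ↥K) K.subtype K.subtype_injective).surjective
    have hL1 : 1 < Nat.card ↥L := (Subgroup.one_lt_card_iff_ne_bot (H := L)).mpr hLbot
    have hQlt : Nat.card (G ⧸ L) < N := by
      have h5 : Nat.card G = Nat.card (G ⧸ L) * Nat.card ↥L :=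
        Subgroup.card_eq_card_quotient_mul_card_subgroup L
      rw [← hN, h5]
      exact Nat.lt_mul_iff_one_lt_right Nat.card_pos |>.mpr hL1
    obtain ⟨hQcyc, hQcop⟩ := ih (Nat.card (G ⧸ L)) hQlt rfl
    set π := QuotientGroup.mk' L with hπ
    have hπsurj : Function.Surjective π := QuotientGroup.mk'_surjective L
    have hmapcomm : Subgroup.map π (commutator G) = commutator (G ⧸ L) := by
      rw [_root_.commutator_def, _root_.commutator_def, Subgroup.map_commutator,
        Subgroup.map_top_of_surjective π hπsurj]
    set H' := commutator G with hH'
    set ψ := π.comp H'.subtype with hψ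
    have hψrange : ψ.range = commutator (G ⧸ L) := by
      rw [hψ, MonoidHom.range_comp, Subgroup.range_subtype, hmapcomm]
    have hψker : ψ.ker = L.subgroupOf H' := by
      ext x
      simp only [hψ, MonoidHom.mem_ker, MonoidHom.comp_apply, Subgroup.mem_subgroupOf,
        Subgroup.coe_subtype, hπ, QuotientGroup.mk'_apply, QuotientGroup.eq_one_iff]
    have hkerφ : commutator G ≤ (MulAut.conjNormal (G := G) (H := L)).ker := by
      rw [_root_.commutator_def]
      refine Subgroup.commutator_le.mpr fun a _ b _ => ?_
      rw [MonoidHom.mem_ker, map_commutatorElement]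
      exact commutatorElement_eq_one_iff_commute.mpr (mulAut_comm_of_isCyclic _ _)
    have hcommL : ∀ g : G, g ∈ commutator G → ∀ w : G, w ∈ L → g * w = w * g := by
      intro g hg w hw
      have h2 : MulAut.conjNormal (G := G) (H := L) g = 1 := hkerφ hg
      have h3 : ((MulAut.conjNormal (G := G) g ⟨w, hw⟩ : ↥L) : G) = g * w * g⁻¹ :=
        MulAut.conjNormal_apply g ⟨w, hw⟩
      rw [h2] at h3
      simp only [MulAut.one_apply] at h3
      have h4 : g * w * g⁻¹ = w := h3.symm
      have h5 : g * w = (g * w * g⁻¹) * g := by group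
      rw [h5, h4]
    have hcent : ψ.ker ≤ Subgroup.center ↥H' := by
      rw [hψker]
      intro x hx
      rw [Subgroup.mem_center_iff]
      intro h
      rw [Subgroup.mem_subgroupOf] at hx
      exact Subtype.ext ((hcommL (h : G) h.2 (x : G) hx))
    haveI : IsCyclic ↥(ψ.range) := by rw [hψrange]; exact hQcyc
    have hH'comm : ∀ a b : ↥H', a * b = b * a :=
      commutative_of_cyclic_center_quotient ψ.rangeRestrict
        (by rw [MonoidHom.ker_rangeRestrict]; exact hcent)
    have hH'cyc : IsCyclic ↥H' := isCyclic_of_comm_zgroup hH'comm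
    have hcardH' : Nat.card ↥H' = Nat.card (commutator (G ⧸ L)) * Nat.card ↥L := by
      have h1 : Nat.card ↥H' = Nat.card (↥H' ⧸ ψ.ker) * Nat.card ψ.ker :=
        Subgroup.card_eq_card_quotient_mul_card_subgroup ψ.ker
      have h2 : Nat.card (↥H' ⧸ ψ.ker) = Nat.card ψ.range :=
        Nat.card_congr (QuotientGroup.quotientKerEquivRange ψ).toEquiv
      have h3 : Nat.card ψ.range = Nat.card (commutator (G ⧸ L)) := by rw [hψrange]
      have h4 : Nat.card ψ.ker = Nat.card ↥L := by
        rw [hψker]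
        exact Nat.card_congr (Subgroup.subgroupOfEquivOfLe hLG').toEquiv
      rw [h1, h2, h3, h4]
    have hindexH' : H'.index = (commutator (G ⧸ L)).index := by
      have h1 : Subgroup.comap π (commutator (G ⧸ L)) = H' := by
        rw [← hmapcomm, Subgroup.comap_map_eq, hπ, QuotientGroup.ker_mk']
        exact sup_of_le_left hLG'
      rw [← h1, Subgroup.index_comap_of_surjective _ hπsurj]
    have hrel : H'.relIndex K * K.index = H'.index := Subgroup.relIndex_mul_index hGK
    have hKidx : K.index = Nat.card (P : Subgroup G) := hKP.symm.index_eq_card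
    have hreldvd : H'.relIndex K ∣ (commutator ↥K).index := by
      have h1 : commutator ↥K ≤ H'.subgroupOf K := by
        intro y hy
        rw [Subgroup.mem_subgroupOf]
        exact hLG' ⟨y, hy, rfl⟩
      exact Subgroup.index_dvd_of_le h1
    have hcardL : Nat.card ↥L = Nat.card (commutator ↥K) :=
      (Nat.card_congr (Subgroup.equivMapOfInjective (commutator ↥K) K.subtype
        K.subtype_injective).toEquiv).symm
    have hcopL : (Nat.card ↥L).Coprime H'.index := by
      rw [← hrel, hcardL]
      apply Nat.Coprime.mul_right
      · exact Nat.Coprime.coprime_dvd_right hreldvd hKcop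
      · rw [hKidx, P.card_eq_multiplicity]
        have hnd : ¬ p ∣ Nat.card (commutator ↥K) :=
          fun hdvd => hpK (hdvd.trans (Subgroup.card_subgroup_dvd_card _))
        exact Nat.Coprime.pow_right _ ((hp.coprime_iff_not_dvd.mpr hnd).symm)
    have hcopQ : (Nat.card (commutator (G ⧸ L))).Coprime H'.index := by
      rw [hindexH']; exact hQcop
    exact ⟨hH'cyc, by rw [hcardH']; exact Nat.Coprime.mul hcopQ hcopL⟩

/-- Burnside: a finite group all of whose Sylow subgroups are cyclic (a Z-group) is split
metacyclic: `G = ⟨σ, τ : σ^m = 1, τ^n = 1, τστ⁻¹ = σ^r⟩` with `r^n ≡ 1 (mod m)` and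
`gcd (m, n(r-1)) = 1`. -/
theorem zGroup_is_split_metacyclic
    {G : Type*} [Group G] [Finite G]
    (hZ : ∀ (p : ℕ), p.Prime → ∀ P : Sylow p G, IsCyclic (P : Subgroup G)) :
    ∃ (m n r : ℕ) (σ τ : G), 0 < m ∧ 0 < n ∧ 1 ≤ r ∧
      orderOf σ = m ∧ orderOf τ = n ∧
      τ * σ * τ⁻¹ = σ ^ r ∧
      r ^ n ≡ 1 [MOD m] ∧ Nat.gcd m (n * (r - 1)) = 1 ∧
      (Subgroup.zpowers σ).Normal ∧
      Subgroup.zpowers σ ⊓ Subgroup.zpowers τ = ⊥ ∧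
      Subgroup.zpowers σ ⊔ Subgroup.zpowers τ = ⊤ := by
  haveI : IsZGroup G := ⟨hZ⟩
  obtain ⟨hGc, hGcop⟩ := main_aux_s5 (Nat.card G) rfl
  set Nc := commutator G with hNc
  obtain ⟨Hc, hH⟩ := Subgroup.exists_right_complement'_of_coprime hGcop
  have habel : ∀ a b : G ⧸ Nc, a * b = b * a := by
    intro a b
    obtain ⟨x, rfl⟩ := QuotientGroup.mk'_surjective Nc a
    obtain ⟨y, rfl⟩ := QuotientGroup.mk'_surjective Nc b
    refine (commutatorElement_eq_one_iff_commute.mp ?_).eq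
    rw [← map_commutatorElement]
    refine (QuotientGroup.eq_one_iff _).mpr ?_
    rw [hNc, _root_.commutator_def]
    exact Subgroup.commutator_mem_commutator (Subgroup.mem_top x) (Subgroup.mem_top y)
  have hQcyc : IsCyclic (G ⧸ Nc) := isCyclic_of_comm_zgroup habel
  set ψ := (QuotientGroup.mk' Nc).comp Hc.subtype with hψ
  have hψsurj : Function.Surjective ψ := by
    intro q
    obtain ⟨g, rfl⟩ := QuotientGroup.mk'_surjective Nc q
    obtain ⟨⟨kk, pp⟩, hkp⟩ := (hH.existsUnique g).exists
    refine ⟨pp, ?_⟩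
    have h1 : (QuotientGroup.mk' Nc) (kk : G) = 1 := (QuotientGroup.eq_one_iff _).mpr kk.2
    calc ψ pp = (QuotientGroup.mk' Nc) (pp : G) := rfl
    _ = (QuotientGroup.mk' Nc) ((kk : G) * (pp : G)) := by rw [map_mul, h1, one_mul]
    _ = (QuotientGroup.mk' Nc) g := by rw [hkp]
  have hψinj : Function.Injective ψ := by
    rw [← MonoidHom.ker_eq_bot_iff, eq_bot_iff]
    intro x hx
    rw [MonoidHom.mem_ker] at hx
    have h1 : (x : G) ∈ Nc := by
      rw [← QuotientGroup.eq_one_iff (x : G)]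
      exact hx
    have h2 : (x : G) = 1 := Subgroup.disjoint_def.mp hH.disjoint h1 x.2
    rw [Subgroup.mem_bot]
    exact Subtype.ext h2
  have e : ↥Hc ≃* (G ⧸ Nc) := MulEquiv.ofBijective ψ ⟨hψinj, hψsurj⟩
  haveI : IsCyclic ↥Hc := isCyclic_of_surjective e.symm e.symm.surjective
  haveI hGc' : IsCyclic ↥Nc := hGc
  obtain ⟨c, hc⟩ := hGc'.exists_generator
  obtain ⟨t, ht⟩ := IsCyclic.exists_generator (α := ↥Hc)
  have hctop : zpowers c = (⊤ : Subgroup ↥Nc) := by rw [eq_top_iff]; exact fun x _ => hc x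
  have httop : zpowers t = (⊤ : Subgroup ↥Hc) := by rw [eq_top_iff]; exact fun x _ => ht x
  set σ := ((c : G)) with hσdef
  set τ := ((t : G)) with hτdef
  have hzσ : zpowers σ = Nc := by
    rw [hσdef, show ((c : G)) = Nc.subtype c from rfl, ← MonoidHom.map_zpowers, hctop,
      ← MonoidHom.range_eq_map, Subgroup.range_subtype]
  have hzτ : zpowers τ = Hc := by
    rw [hτdef, show ((t : G)) = Hc.subtype t from rfl, ← MonoidHom.map_zpowers, httop,
      ← MonoidHom.range_eq_map, Subgroup.range_subtype]
  set m := orderOf σ with hm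
  set n := orderOf τ with hn
  have hm0 : 0 < m := orderOf_pos σ
  have hn0 : 0 < n := orderOf_pos τ
  have hmcard : m = Nat.card ↥Nc := by rw [hm, ← Nat.card_zpowers, hzσ]
  have hncard : n = Nat.card ↥Hc := by rw [hn, ← Nat.card_zpowers, hzτ]
  have hidx : Nc.index = Nat.card ↥Hc := hH.symm.index_eq_card
  have hcopmn : Nat.Coprime m n := by
    rw [hmcard, hncard, ← hidx]
    exact hGcop
  haveI hnorm : (zpowers σ).Normal := by rw [hzσ, hNc]; infer_instance
  have htop : zpowers σ ⊔ zpowers τ = ⊤ := by rw [hzσ, hzτ]; exact hH.sup_eq_top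
  have hinf : zpowers σ ⊓ zpowers τ = ⊥ := by
    rw [hzσ, hzτ]
    exact disjoint_iff.mp hH.disjoint
  by_cases hσ1 : σ = 1
  · -- trivial commutator case
    refine ⟨m, n, 1, σ, τ, hm0, hn0, le_refl 1, rfl, rfl, ?_, ?_, ?_, hnorm, hinf, htop⟩
    · rw [hσ1, pow_one]
      group
    · have hm1 : m = 1 := by rw [hm, hσ1, orderOf_one]
      rw [hm1, one_pow]
    · have hm1 : m = 1 := by rw [hm, hσ1, orderOf_one]
      rw [hm1]
      exact Nat.gcd_one_left _
  · obtain ⟨r, hr1, hconj, hmod, hcommW⟩ := core_struct hnorm htop hσ1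
    have hWσ : zpowers (σ ^ (r - 1)) = zpowers σ := by
      rw [← hcommW, hzσ, hNc]
    have hgcd : Nat.gcd m (r - 1) = 1 := by
      have h1 : orderOf (σ ^ (r - 1)) = m := by
        rw [← Nat.card_zpowers, hWσ, Nat.card_zpowers]
      rw [orderOf_pow, ← hm] at h1
      rcases (Nat.div_eq_self.mp h1) with h | h
      · exact absurd h hm0.ne'
      · exact h
    refine ⟨m, n, r, σ, τ, hm0, hn0, hr1, rfl, rfl, hconj, hmod, ?_, hnorm, hinf, htop⟩
    exact Nat.Coprime.mul_right hcopmn hgcd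
end
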